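/- Let b₁ ≥ 0 be a natural number. Let α : ℂ[x₁,…,x₆] → ℂ[y₁^{±1}, y₂^{±1}, y₃^{±1}] be the ℂ-algebra homomorphism determined by α(x₁) = y₁, α(x₂) = y₂, α(x₃) = y₂, α(x₄) = y₁y₂^{−1}, α(x₅) = y₁^{−b₁−1}y₂y₃, α(x₆) = y₃. Then the kernel of α equals the ideal generated by the three binomials x₁ − x₂x₄, x₃ − x₂, and x₂^{b₁} x₄^{b₁+1} x₅ − x₆. -/

import Mathlib

open MvPolynomial

noncomputable def laurentMonomial3 (v : Fin 3 → ℤ) : AddMonoidAlgebra ℂ (Fin 3 → ℤ) :=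
  AddMonoidAlgebra.single v 1

namespace ToricAux

noncomputable def V (b₁ : ℕ) : Fin 3 → Fin 3 → ℤ :=
  ![![0,1,0], ![1,-1,0], ![-((b₁:ℤ)+1),1,1]]

noncomputable def F (b₁ : ℕ) : (Fin 3 →₀ ℕ) →+ (Fin 3 → ℤ) where
  toFun d := fun i => (d 0 : ℤ) * V b₁ 0 i + (d 1 : ℤ) * V b₁ 1 i + (d 2 : ℤ) * V b₁ 2 i
  map_zero' := by funext i; simp
  map_add' d e := by funext i; simp only [Finsupp.add_apply, Pi.add_apply]; push_cast; ring

lemma F_inj (b₁ : ℕ) : Function.Injective (F b₁) := by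
  intro d e h
  have h0 := congrFun h 0
  have h1 := congrFun h 1
  have h2 := congrFun h 2
  simp only [F, V, AddMonoidHom.coe_mk, ZeroHom.coe_mk, Matrix.cons_val_zero,
    Matrix.cons_val_one, Matrix.head_cons, Matrix.cons_val_two, Matrix.tail_cons] at h0 h1 h2
  have e2 : (d 2 : ℤ) = e 2 := by linarith
  have e1 : (d 1 : ℤ) = e 1 := by rw [e2] at h0; linarith
  have e0 : (d 0 : ℤ) = e 0 := by rw [e1, e2] at h1; linarith
  have n0 : d 0 = e 0 := by exact_mod_cast e0
  have n1 : d 1 = e 1 := by exact_mod_cast e1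
  have n2 : d 2 = e 2 := by exact_mod_cast e2
  ext i
  fin_cases i <;> [exact n0; exact n1; exact n2]

noncomputable def ψ (b₁ : ℕ) : MvPolynomial (Fin 3) ℂ →ₐ[ℂ] AddMonoidAlgebra ℂ (Fin 3 → ℤ) :=
  AddMonoidAlgebra.mapDomainAlgHom ℂ ℂ (F b₁)

lemma ψ_inj (b₁ : ℕ) : Function.Injective (ψ b₁) := by
  intro p q h
  exact AddMonoidAlgebra.mapDomain_injective (F_inj b₁) h

lemma ψ_X (b₁ : ℕ) (i : Fin 3) : ψ b₁ (X i) = laurentMonomial3 (V b₁ i) := by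
  show AddMonoidAlgebra.mapDomain (F b₁) (X i) = _
  rw [show (X i : MvPolynomial (Fin 3) ℂ) = AddMonoidAlgebra.single (Finsupp.single i 1) 1 from rfl,
    AddMonoidAlgebra.mapDomain_single]
  congr 1
  funext j
  fin_cases i <;> simp [F, V]


noncomputable def tImg (b₁ : ℕ) : Fin 6 → MvPolynomial (Fin 3) ℂ
  | 0 => X 0 * X 1
  | 1 => X 0
  | 2 => X 0
  | 3 => X 1
  | 4 => X 2
  | 5 => X 0 ^ b₁ * X 1 ^ (b₁ + 1) * X 2

noncomputable def τ (b₁ : ℕ) : MvPolynomial (Fin 6) ℂ →ₐ[ℂ] MvPolynomial (Fin 3) ℂ :=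
  aeval (tImg b₁)

noncomputable def σ' : MvPolynomial (Fin 3) ℂ →ₐ[ℂ] MvPolynomial (Fin 6) ℂ :=
  aeval ![X 1, X 3, X 4]

lemma single_mul (u v : Fin 3 → ℤ) :
    laurentMonomial3 u * laurentMonomial3 v = laurentMonomial3 (u + v) := by
  simp [laurentMonomial3, AddMonoidAlgebra.single_mul_single]

lemma single_pow (u : Fin 3 → ℤ) (n : ℕ) :
    laurentMonomial3 u ^ n = laurentMonomial3 (n • u) := by
  induction n with
  | zero => simp [laurentMonomial3]; rfl
  | succ n ih =>
    rw [pow_succ, ih, single_mul]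
    congr 1
    rw [add_smul, one_smul]

lemma alpha_eq (b₁ : ℕ) :
    (MvPolynomial.aeval
        ![laurentMonomial3 ![1, 0, 0], laurentMonomial3 ![0, 1, 0],
          laurentMonomial3 ![0, 1, 0], laurentMonomial3 ![1, -1, 0],
          laurentMonomial3 ![-((b₁ : ℤ) + 1), 1, 1], laurentMonomial3 ![0, 0, 1]] :
      MvPolynomial (Fin 6) ℂ →ₐ[ℂ] AddMonoidAlgebra ℂ (Fin 3 → ℤ)) =
    (ψ b₁).comp (τ b₁) := by
  apply MvPolynomial.algHom_ext
  intro i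
  rw [aeval_X, AlgHom.comp_apply, τ, aeval_X]
  fin_cases i
  · show laurentMonomial3 ![1, 0, 0] = ψ b₁ (X 0 * X 1)
    rw [map_mul, ψ_X, ψ_X, single_mul]
    congr 1; funext j; fin_cases j <;> simp [V]
  · show laurentMonomial3 ![0, 1, 0] = ψ b₁ (X 0)
    rw [ψ_X]; rfl
  · show laurentMonomial3 ![0, 1, 0] = ψ b₁ (X 0)
    rw [ψ_X]; rfl
  · show laurentMonomial3 ![1, -1, 0] = ψ b₁ (X 1)
    rw [ψ_X]; rfl
  · show laurentMonomial3 ![-((b₁ : ℤ) + 1), 1, 1] = ψ b₁ (X 2)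
    rw [ψ_X]; rfl
  · show laurentMonomial3 ![0, 0, 1] = ψ b₁ (X 0 ^ b₁ * X 1 ^ (b₁ + 1) * X 2)
    rw [map_mul, map_mul, map_pow, map_pow, ψ_X, ψ_X, ψ_X, single_pow, single_pow,
      single_mul, single_mul]
    congr 1; funext j; fin_cases j <;> simp [V] <;> push_cast <;> ring

end ToricAux

open ToricAux in
theorem toric_ideal_case_3_1_5 (b₁ : ℕ) :
    RingHom.ker (MvPolynomial.aeval
        ![laurentMonomial3 ![1, 0, 0], laurentMonomial3 ![0, 1, 0],
          laurentMonomial3 ![0, 1, 0], laurentMonomial3 ![1, -1, 0],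
          laurentMonomial3 ![-((b₁ : ℤ) + 1), 1, 1], laurentMonomial3 ![0, 0, 1]] :
      MvPolynomial (Fin 6) ℂ →ₐ[ℂ] AddMonoidAlgebra ℂ (Fin 3 → ℤ)) =
    Ideal.span {(X 0 - X 1 * X 3 : MvPolynomial (Fin 6) ℂ),
      X 2 - X 1, X 1 ^ b₁ * X 3 ^ (b₁ + 1) * X 4 - X 5} := by
  rw [alpha_eq]
  set I : Ideal (MvPolynomial (Fin 6) ℂ) := Ideal.span {(X 0 - X 1 * X 3 : MvPolynomial (Fin 6) ℂ),
      X 2 - X 1, X 1 ^ b₁ * X 3 ^ (b₁ + 1) * X 4 - X 5} with hI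
  have m1 : (X 0 - X 1 * X 3 : MvPolynomial (Fin 6) ℂ) ∈ I := Ideal.subset_span (by simp)
  have m2 : (X 2 - X 1 : MvPolynomial (Fin 6) ℂ) ∈ I := Ideal.subset_span (by simp)
  have m3 : (X 1 ^ b₁ * X 3 ^ (b₁ + 1) * X 4 - X 5 : MvPolynomial (Fin 6) ℂ) ∈ I :=
    Ideal.subset_span (by simp)
  have key : ∀ p : MvPolynomial (Fin 6) ℂ, p - σ' (τ b₁ p) ∈ I := by
    have hX : ∀ i : Fin 6, (X i : MvPolynomial (Fin 6) ℂ) - σ' (τ b₁ (X i)) ∈ I := by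
      intro i
      rw [τ, aeval_X]
      fin_cases i
      · show (X 0 : MvPolynomial (Fin 6) ℂ) - σ' (X 0 * X 1) ∈ I
        rw [map_mul, σ', aeval_X, aeval_X]
        exact m1
      · show (X 1 : MvPolynomial (Fin 6) ℂ) - σ' (X 0) ∈ I
        rw [σ', aeval_X]; simpa using I.zero_mem
      · show (X 2 : MvPolynomial (Fin 6) ℂ) - σ' (X 0) ∈ I
        rw [σ', aeval_X]; exact m2
      · show (X 3 : MvPolynomial (Fin 6) ℂ) - σ' (X 1) ∈ I
        rw [σ', aeval_X]; simpa using I.zero_mem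
      · show (X 4 : MvPolynomial (Fin 6) ℂ) - σ' (X 2) ∈ I
        rw [σ', aeval_X]; simpa using I.zero_mem
      · show (X 5 : MvPolynomial (Fin 6) ℂ) - σ' (X 0 ^ b₁ * X 1 ^ (b₁ + 1) * X 2) ∈ I
        rw [map_mul, map_mul, map_pow, map_pow, σ', aeval_X, aeval_X, aeval_X]
        show (X 5 : MvPolynomial (Fin 6) ℂ) - X 1 ^ b₁ * X 3 ^ (b₁ + 1) * X 4 ∈ I
        simpa using I.neg_mem m3
    intro p
    induction p using MvPolynomial.induction_on with
    | C a => simp [τ, σ']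
    | add p q hp hq => simpa [map_add, add_sub_add_comm] using I.add_mem hp hq
    | mul_X p i hp =>
      have : p * X i - σ' (τ b₁ (p * X i)) =
          p * (X i - σ' (τ b₁ (X i))) + σ' (τ b₁ (X i)) * (p - σ' (τ b₁ p)) := by
        simp only [map_mul]; ring
      rw [this]
      exact I.add_mem (I.mul_mem_left _ (hX i)) (I.mul_mem_left _ hp)
  have hτ1 : τ b₁ (X 0 - X 1 * X 3 : MvPolynomial (Fin 6) ℂ) = 0 := by
    rw [map_sub, map_mul, τ, aeval_X, aeval_X, aeval_X]
    show (X 0 * X 1 : MvPolynomial (Fin 3) ℂ) - X 0 * X 1 = 0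
    ring
  have hτ2 : τ b₁ (X 2 - X 1 : MvPolynomial (Fin 6) ℂ) = 0 := by
    rw [map_sub, τ, aeval_X, aeval_X]
    show (X 0 : MvPolynomial (Fin 3) ℂ) - X 0 = 0
    ring
  have hτ3 : τ b₁ (X 1 ^ b₁ * X 3 ^ (b₁ + 1) * X 4 - X 5 : MvPolynomial (Fin 6) ℂ) = 0 := by
    rw [map_sub, map_mul, map_mul, map_pow, map_pow, τ, aeval_X, aeval_X, aeval_X, aeval_X]
    show (X 0 : MvPolynomial (Fin 3) ℂ) ^ b₁ * X 1 ^ (b₁ + 1) * X 2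
      - X 0 ^ b₁ * X 1 ^ (b₁ + 1) * X 2 = 0
    ring
  apply le_antisymm
  · intro p hp
    rw [RingHom.mem_ker] at hp
    have hτ : τ b₁ p = 0 := ψ_inj b₁ (by simpa using hp)
    have := key p
    rwa [hτ, map_zero, sub_zero] at this
  · rw [hI, Ideal.span_le]
    intro g hg
    rw [SetLike.mem_coe, RingHom.mem_ker]
    rcases hg with rfl | rfl | rfl <;>
      simp [AlgHom.comp_apply, hτ1, hτ2, hτ3]
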